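/- Let K⁺ be the maximal totally real subfield of ℚ₃ and O its ring of integers. If α₁, α₂, α₃, α₄ ∈ O, then α₁² + α₂² + α₃² + α₄² is a sum of three squares of elements of O. Consequently P(O) = 3. -/

import Mathlib

instance : Fact (Nat.Prime 3) := ⟨by norm_num⟩

/-- An element of a ℚ-algebra is totally real if it is algebraic over ℚ and all
complex roots of its minimal polynomial are real. -/
def TotallyReal {A : Type*} [Field A] [Algebra ℚ A] (x : A) : Prop :=
  IsAlgebraic ℚ x ∧ ∀ z : ℂ, Polynomial.aeval z (minpoly ℚ x) = 0 → z.im = 0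

/-- `x` is a sum of `n` squares of elements of the subset `S`. -/
def IsSumOfSquaresIn {R : Type*} [CommRing R] (S : Set R) (n : ℕ) (x : R) : Prop :=
  ∃ f : Fin n → R, (∀ i, f i ∈ S) ∧ x = ∑ i, (f i) ^ 2

/-- The Pythagoras number of the set `S`: the least `n` with Σⁿ S² = Σⁿ⁺¹ S². -/
noncomputable def pythagorasNumberOf {R : Type*} [CommRing R] (S : Set R) : ℕ∞ :=
  sInf ((fun n : ℕ => (n : ℕ∞)) ''
    {n | ∀ x, IsSumOfSquaresIn S n x ↔ IsSumOfSquaresIn S (n + 1) x})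

open Polynomial IntermediateField

section Aux

/-! ### p-adic auxiliary lemmas -/

lemma three_dvd_iff (x : ℤ_[3]) : (3:ℤ_[3]) ∣ x ↔ PadicInt.toZMod x = 0 := by
  rw [← RingHom.mem_ker, PadicInt.ker_toZMod, IsLocalRing.mem_maximalIdeal,
    PadicInt.mem_nonunits, PadicInt.norm_lt_one_iff_dvd]; norm_num

lemma norm_three : ‖(3 : ℤ_[3])‖ = 3⁻¹ := by
  have := PadicInt.norm_p (p := 3); norm_num at this ⊢; exact_mod_cast this

lemma unit_or_three_dvd (c : ℤ_[3]) : IsUnit c ∨ (3:ℤ_[3]) ∣ c := by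
  rcases lt_or_eq_of_le (PadicInt.norm_le_one c) with h | h
  · right
    have := (PadicInt.norm_lt_one_iff_dvd c).mp h
    exact_mod_cast this
  · exact Or.inl (PadicInt.isUnit_iff.mpr h)

lemma toZMod_sq_eq_one {c : ℤ_[3]} (h : IsUnit c) : PadicInt.toZMod (c^2) = 1 := by
  have h0 : PadicInt.toZMod c ≠ 0 := by
    intro h0
    rw [← three_dvd_iff] at h0
    have := (PadicInt.norm_lt_one_iff_dvd c).mpr (by exact_mod_cast h0)
    rw [PadicInt.isUnit_iff.mp h] at this; norm_num at this
  rw [map_pow]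
  revert h0; generalize PadicInt.toZMod c = t; revert t; decide

lemma hensel_sq (u : ℤ_[3]) (h : (3 : ℤ_[3]) ∣ (u - 1)) : ∃ γ : ℤ_[3], γ ^ 2 = u := by
  have h2 : ‖(2 : ℤ_[3])‖ = 1 := by
    refine le_antisymm (PadicInt.norm_le_one _) ?_
    by_contra hlt
    push_neg at hlt
    have : (3:ℤ_[3]) ∣ 2 := (PadicInt.norm_lt_one_iff_dvd _).mp (by exact_mod_cast hlt)
    rw [three_dvd_iff] at this
    rw [map_ofNat] at this
    exact absurd this (by decide)
  have hnorm : ‖(X ^ 2 - C u : ℤ_[3][X]).eval 1‖ <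
      ‖(X ^ 2 - C u : ℤ_[3][X]).derivative.eval 1‖ ^ 2 := by
    have h1 : (X ^ 2 - C u : ℤ_[3][X]).eval 1 = -(u - 1) := by simp
    have hd : (X ^ 2 - C u : ℤ_[3][X]).derivative.eval 1 = 2 := by
      simp [derivative_sub]; norm_num
    rw [h1, hd, h2, norm_neg]
    obtain ⟨k, hk⟩ := h
    rw [hk, norm_mul, norm_three]
    have := PadicInt.norm_le_one k
    nlinarith [norm_nonneg k]
  obtain ⟨z, hz, -⟩ := hensels_lemma hnorm
  refine ⟨z, ?_⟩
  have : z^2 - u = 0 := by simpa using hz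
  linear_combination this

lemma sq_decomp (x c₁ c₂ c₃ : ℤ_[3]) (h : (3:ℤ_[3]) ∣ (c₁^2 + c₂^2 + c₃^2)) :
    ∃ γ : ℤ_[3], γ^2 = x^2 + (c₁*x)^2 + (c₂*x)^2 + (c₃*x)^2 := by
  obtain ⟨k, hk⟩ := h
  obtain ⟨u, hu⟩ := hensel_sq (1 + c₁^2 + c₂^2 + c₃^2) ⟨k, by rw [← hk]; ring⟩
  exact ⟨x * u, by rw [mul_pow, hu]; ring⟩

lemma toZMod_sq_dvd {c : ℤ_[3]} (h : (3:ℤ_[3]) ∣ c) : (3:ℤ_[3]) ∣ c^2 := by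
  rw [pow_two]; exact Dvd.dvd.mul_right h c

lemma sum3_dvd {c₁ c₂ c₃ : ℤ_[3]}
    (hpat : ((3:ℤ_[3]) ∣ c₁^2 ∧ (3:ℤ_[3]) ∣ c₂^2 ∧ (3:ℤ_[3]) ∣ c₃^2) ∨
      (PadicInt.toZMod (c₁^2) = 1 ∧ PadicInt.toZMod (c₂^2) = 1 ∧ PadicInt.toZMod (c₃^2) = 1)) :
    (3:ℤ_[3]) ∣ (c₁^2 + c₂^2 + c₃^2) := by
  rcases hpat with ⟨d₁, d₂, d₃⟩ | ⟨u₁, u₂, u₃⟩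
  · exact dvd_add (dvd_add d₁ d₂) d₃
  · rw [three_dvd_iff, map_add, map_add, u₁, u₂, u₃]; decide

lemma core4 (x y z w : ℤ_[3]) (hy : x ∣ y) (hz : x ∣ z) (hw : x ∣ w) :
    ∃ b₁ b₂ γ cy cz cw : ℤ_[3],
      (b₁ = 0 ∨ b₁ = y ∨ b₁ = z ∨ b₁ = w) ∧
      (b₂ = 0 ∨ b₂ = y ∨ b₂ = z ∨ b₂ = w) ∧
      (cy = y ∨ cy = 0) ∧ (cz = z ∨ cz = 0) ∧ (cw = w ∨ cw = 0) ∧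
      γ^2 = x^2 + cy^2 + cz^2 + cw^2 ∧
      x^2 + y^2 + z^2 + w^2 = b₁^2 + b₂^2 + γ^2 := by
  obtain ⟨e₁, rfl⟩ := hy
  obtain ⟨e₂, rfl⟩ := hz
  obtain ⟨e₃, rfl⟩ := hw
  rcases unit_or_three_dvd e₁ with u₁ | d₁ <;>
  rcases unit_or_three_dvd e₂ with u₂ | d₂ <;>
  rcases unit_or_three_dvd e₃ with u₃ | d₃
  -- UUU
  · obtain ⟨γ, hγ⟩ := sq_decomp x e₁ e₂ e₃ (sum3_dvd
      (Or.inr ⟨toZMod_sq_eq_one u₁, toZMod_sq_eq_one u₂, toZMod_sq_eq_one u₃⟩))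
    exact ⟨0, 0, γ, x*e₁, x*e₂, x*e₃, Or.inl rfl, Or.inl rfl, Or.inl rfl, Or.inl rfl, Or.inl rfl,
      by rw [hγ]; ring, by rw [hγ]; ring⟩
  -- UUD : remove y z
  · obtain ⟨γ, hγ⟩ := sq_decomp x e₃ 0 0 (sum3_dvd
      (Or.inl ⟨toZMod_sq_dvd d₃, by simp, by simp⟩))
    exact ⟨x*e₁, x*e₂, γ, 0, 0, x*e₃, Or.inr (Or.inl rfl), Or.inr (Or.inr (Or.inl rfl)),
      Or.inr rfl, Or.inr rfl, Or.inl rfl, by rw [hγ]; ring, by rw [hγ]; ring⟩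
  -- UDU : remove y w
  · obtain ⟨γ, hγ⟩ := sq_decomp x e₂ 0 0 (sum3_dvd
      (Or.inl ⟨toZMod_sq_dvd d₂, by simp, by simp⟩))
    exact ⟨x*e₁, x*e₃, γ, 0, x*e₂, 0, Or.inr (Or.inl rfl), Or.inr (Or.inr (Or.inr rfl)),
      Or.inr rfl, Or.inl rfl, Or.inr rfl, by rw [hγ]; ring, by rw [hγ]; ring⟩
  -- UDD : remove y
  · obtain ⟨γ, hγ⟩ := sq_decomp x e₂ e₃ 0 (sum3_dvd
      (Or.inl ⟨toZMod_sq_dvd d₂, toZMod_sq_dvd d₃, by simp⟩))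
    exact ⟨x*e₁, 0, γ, 0, x*e₂, x*e₃, Or.inr (Or.inl rfl), Or.inl rfl,
      Or.inr rfl, Or.inl rfl, Or.inl rfl, by rw [hγ]; ring, by rw [hγ]; ring⟩
  -- DUU : remove z w
  · obtain ⟨γ, hγ⟩ := sq_decomp x e₁ 0 0 (sum3_dvd
      (Or.inl ⟨toZMod_sq_dvd d₁, by simp, by simp⟩))
    exact ⟨x*e₂, x*e₃, γ, x*e₁, 0, 0, Or.inr (Or.inr (Or.inl rfl)), Or.inr (Or.inr (Or.inr rfl)),
      Or.inl rfl, Or.inr rfl, Or.inr rfl, by rw [hγ]; ring, by rw [hγ]; ring⟩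
  -- DUD : remove z
  · obtain ⟨γ, hγ⟩ := sq_decomp x e₁ e₃ 0 (sum3_dvd
      (Or.inl ⟨toZMod_sq_dvd d₁, toZMod_sq_dvd d₃, by simp⟩))
    exact ⟨x*e₂, 0, γ, x*e₁, 0, x*e₃, Or.inr (Or.inr (Or.inl rfl)), Or.inl rfl,
      Or.inl rfl, Or.inr rfl, Or.inl rfl, by rw [hγ]; ring, by rw [hγ]; ring⟩
  -- DDU : remove w
  · obtain ⟨γ, hγ⟩ := sq_decomp x e₁ e₂ 0 (sum3_dvd
      (Or.inl ⟨toZMod_sq_dvd d₁, toZMod_sq_dvd d₂, by simp⟩))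
    exact ⟨x*e₃, 0, γ, x*e₁, x*e₂, 0, Or.inr (Or.inr (Or.inr rfl)), Or.inl rfl,
      Or.inl rfl, Or.inl rfl, Or.inr rfl, by rw [hγ]; ring, by rw [hγ]; ring⟩
  -- DDD
  · obtain ⟨γ, hγ⟩ := sq_decomp x e₁ e₂ e₃ (sum3_dvd
      (Or.inl ⟨toZMod_sq_dvd d₁, toZMod_sq_dvd d₂, toZMod_sq_dvd d₃⟩))
    exact ⟨0, 0, γ, x*e₁, x*e₂, x*e₃, Or.inl rfl, Or.inl rfl, Or.inl rfl, Or.inl rfl, Or.inl rfl,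
      by rw [hγ]; ring, by rw [hγ]; ring⟩

/-- Among four elements of `ℤ_[3]`, one divides all the others. -/
lemma dom4 (a b c d : ℤ_[3]) :
    ∃ x : ℤ_[3], (x = a ∨ x = b ∨ x = c ∨ x = d) ∧ x ∣ a ∧ x ∣ b ∧ x ∣ c ∧ x ∣ d := by
  have tot := fun u v : ℤ_[3] => ValuationRing.dvd_total u v
  rcases tot a b with h1 | h1
  · rcases tot a c with h2 | h2
    · rcases tot a d with h3 | h3
      · exact ⟨a, Or.inl rfl, dvd_refl a, h1, h2, h3⟩
      · exact ⟨d, Or.inr (Or.inr (Or.inr rfl)), h3, h3.trans h1, h3.trans h2, dvd_refl d⟩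
    · rcases tot c d with h3 | h3
      · exact ⟨c, Or.inr (Or.inr (Or.inl rfl)), h2, h2.trans h1, dvd_refl c, h3⟩
      · exact ⟨d, Or.inr (Or.inr (Or.inr rfl)), h3.trans h2, (h3.trans h2).trans h1, h3,
          dvd_refl d⟩
  · rcases tot b c with h2 | h2
    · rcases tot b d with h3 | h3
      · exact ⟨b, Or.inr (Or.inl rfl), h1, dvd_refl b, h2, h3⟩
      · exact ⟨d, Or.inr (Or.inr (Or.inr rfl)), h3.trans h1, h3, h3.trans h2, dvd_refl d⟩
    · rcases tot c d with h3 | h3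
      · exact ⟨c, Or.inr (Or.inr (Or.inl rfl)), h2.trans h1, h2, dvd_refl c, h3⟩
      · exact ⟨d, Or.inr (Or.inr (Or.inr rfl)), (h3.trans h2).trans h1, h3.trans h2, h3,
          dvd_refl d⟩

/-! ### Totally real auxiliary lemmas -/

lemma exists_padicInt {x : ℚ_[3]} (hx : IsIntegral ℤ x) : ∃ a : ℤ_[3], (a:ℚ_[3]) = x := by
  have h2 : IsIntegral ℤ_[3] x := hx.tower_top
  exact IsIntegrallyClosed.isIntegral_iff.mp h2

lemma tr_rat (q : ℚ) : TotallyReal (algebraMap ℚ ℚ_[3] q) := by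
  constructor
  · exact isAlgebraic_algebraMap q
  · intro z hz
    rw [minpoly.eq_X_sub_C] at hz
    simp only [map_sub, aeval_X, aeval_C] at hz
    have : z = algebraMap ℚ ℂ q := by linear_combination hz
    rw [this]
    simp [Complex.ext_iff]

lemma tr_zero : TotallyReal (0 : ℚ_[3]) := by simpa using tr_rat 0

lemma tr_one : TotallyReal (1 : ℚ_[3]) := by simpa using tr_rat 1

lemma roots_sum_sq (α : Fin 4 → ℚ_[3]) (h : ∀ i, TotallyReal (α i)) (w : ℂ)
    (hw : aeval w (minpoly ℚ (∑ i, α i ^ 2)) = 0) : w.im = 0 ∧ 0 ≤ w.re := by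
  have hint : ∀ i, IsIntegral ℚ (α i) := fun i => (h i).1.isIntegral
  set L := IntermediateField.adjoin ℚ (Set.range α) with hL
  haveI : Finite (Set.range α) := (Set.finite_range α).to_subtype
  haveI : FiniteDimensional ℚ L :=
    IntermediateField.finiteDimensional_adjoin (fun x _ => by
      obtain ⟨i, rfl⟩ := ‹x ∈ Set.range α›
      exact hint i)
  have hmem : ∀ i, α i ∈ L := fun i => IntermediateField.subset_adjoin _ _ ⟨i, rfl⟩
  set aL : Fin 4 → L := fun i => ⟨α i, hmem i⟩ with haL
  set tL : L := ∑ i, aL i ^ 2 with htL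
  have hcoe : (algebraMap L ℚ_[3]) tL = ∑ i, α i ^ 2 := by
    rw [htL, map_sum]
    rfl
  have hmp : minpoly ℚ (∑ i, α i ^ 2) = minpoly ℚ tL := by
    rw [← hcoe, minpoly.algebraMap_eq (algebraMap L ℚ_[3]).injective]
  have hIt : IsIntegral ℚ tL := IsIntegral.of_finite ℚ tL
  have hroot : w ∈ (minpoly ℚ tL).aroots ℂ := by
    rw [Polynomial.mem_aroots]
    exact ⟨minpoly.ne_zero hIt, by rw [← hmp]; exact hw⟩
  set f := (IntermediateField.algHomAdjoinIntegralEquiv (K := ℂ) ℚ hIt).symm ⟨w, hroot⟩ with hf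
  have hfgen : f (AdjoinSimple.gen ℚ tL) = w :=
    IntermediateField.algHomAdjoinIntegralEquiv_symm_apply_gen ℚ hIt _
  obtain ⟨σ, hσ⟩ := IntermediateField.exists_algHom_of_adjoin_splits
    (fun s (_ : s ∈ (Set.univ : Set L)) =>
      ⟨IsIntegral.of_finite ℚ s, IsAlgClosed.splits _⟩)
    f (IntermediateField.adjoin_univ ℚ L)
  have hσt : σ tL = w := by
    have h1 : σ (algebraMap _ L (AdjoinSimple.gen ℚ tL)) = f (AdjoinSimple.gen ℚ tL) := by
      rw [← hσ]; rfl
    rwa [IntermediateField.AdjoinSimple.algebraMap_gen ℚ tL, hfgen] at h1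
  have hreal : ∀ i, (σ (aL i)).im = 0 := by
    intro i
    apply (h i).2
    have hmpi : minpoly ℚ (α i) = minpoly ℚ (aL i) := by
      have : (algebraMap L ℚ_[3]) (aL i) = α i := rfl
      rw [← this, minpoly.algebraMap_eq (algebraMap L ℚ_[3]).injective]
    have : aeval (aL i) (minpoly ℚ (aL i)) = 0 :=
      minpoly.aeval ℚ (aL i)
    rw [hmpi, Polynomial.aeval_algHom_apply σ (aL i) (minpoly ℚ (aL i)), this, map_zero]
  have hw2 : w = ∑ i, ((σ (aL i)).re : ℂ) ^ 2 := by
    rw [← hσt, htL, map_sum]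
    refine Finset.sum_congr rfl fun i _ => ?_
    rw [map_pow]
    congr 1
    exact (Complex.conj_eq_iff_re.mp (Complex.conj_eq_iff_im.mpr (hreal i))).symm
  have hwre : w = ((∑ i, (σ (aL i)).re ^ 2 : ℝ) : ℂ) := by
    rw [hw2]; push_cast; ring
  rw [hwre]
  constructor
  · rw [Complex.ofReal_im]
  · simp only [Complex.ofReal_re]
    positivity

lemma totallyReal_sqrt (α : Fin 4 → ℚ_[3]) (h : ∀ i, TotallyReal (α i) ∧ IsIntegral ℤ (α i))
    (γ : ℚ_[3]) (hγ : γ ^ 2 = ∑ i, α i ^ 2) : TotallyReal γ ∧ IsIntegral ℤ γ := by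
  have hsint : IsIntegral ℤ (∑ i, α i ^ 2) :=
    IsIntegral.sum _ (fun i _ => ((h i).2).pow 2)
  have hγint : IsIntegral ℤ γ := IsIntegral.of_pow two_pos (hγ ▸ hsint)
  have hγQ : IsIntegral ℚ γ := hγint.tower_top
  refine ⟨⟨hγQ.isAlgebraic, ?_⟩, hγint⟩
  intro z hz
  set t := ∑ i, α i ^ 2 with ht
  have htQ : IsIntegral ℚ t := IsIntegral.tower_top hsint
  have hdvd : minpoly ℚ γ ∣ (minpoly ℚ t).comp (X ^ 2) := by
    apply minpoly.dvd
    rw [aeval_comp]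
    have : aeval γ (X ^ 2 : ℚ[X]) = γ ^ 2 := by simp
    rw [this, hγ, minpoly.aeval]
  have hz2 : aeval (z ^ 2) (minpoly ℚ t) = 0 := by
    obtain ⟨q, hq⟩ := hdvd
    have : aeval z ((minpoly ℚ t).comp (X ^ 2)) = 0 := by
      rw [hq, map_mul, hz, zero_mul]
    rwa [aeval_comp, show aeval z (X ^ 2 : ℚ[X]) = z ^ 2 by simp] at this
  obtain ⟨him, hre⟩ := roots_sum_sq α (fun i => (h i).1) (z ^ 2) hz2
  have h1 : z.re * z.im = 0 := by
    have : (z ^ 2).im = 2 * (z.re * z.im) := by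
      rw [pow_two, Complex.mul_im]; ring
    rw [this] at him; linarith
  rcases mul_eq_zero.mp h1 with h2 | h2
  · have : (z ^ 2).re = z.re ^ 2 - z.im ^ 2 := by
      rw [pow_two, Complex.mul_re]; ring
    rw [this, h2] at hre
    nlinarith [sq_nonneg z.im]
  · exact h2

end Aux

section Part1

lemma coe_two : ((2:ℤ_[3]) : ℚ_[3]) = 2 := by norm_cast
lemma coe_three : ((3:ℤ_[3]) : ℚ_[3]) = 3 := by norm_cast

/-- Every sum of four squares of totally real integral elements of `ℚ_[3]` is a
sum of three squares of such elements. -/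
lemma part1 (α : Fin 4 → ℚ_[3]) (h : ∀ i, TotallyReal (α i) ∧ IsIntegral ℤ (α i)) :
    ∃ β : Fin 3 → ℚ_[3], (∀ i, TotallyReal (β i) ∧ IsIntegral ℤ (β i)) ∧
      α 0 ^ 2 + α 1 ^ 2 + α 2 ^ 2 + α 3 ^ 2 = β 0 ^ 2 + β 1 ^ 2 + β 2 ^ 2 := by
  have hex : ∀ i, ∃ b : ℤ_[3], (b:ℚ_[3]) = α i := fun i => exists_padicInt (h i).2
  choose a ha using hex
  -- the property we will feed to `totallyReal_sqrt`
  have hprop : ∀ u : ℤ_[3], ((u:ℚ_[3]) = 0 ∨ ∃ i, u = a i) →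
      TotallyReal (u:ℚ_[3]) ∧ IsIntegral ℤ (u:ℚ_[3]) := by
    rintro u (h0 | ⟨i, rfl⟩)
    · rw [h0]; exact ⟨tr_zero, isIntegral_zero⟩
    · rw [ha i]; exact h i
  obtain ⟨x, hxeq, hx0, hx1, hx2, hx3⟩ := dom4 (a 0) (a 1) (a 2) (a 3)
  -- helper to build the final data from a `core4` output
  have glue : ∀ (p q r s : Fin 4),
      ((a p)^2 + (a q)^2 + (a r)^2 + (a s)^2
        = (a 0)^2 + (a 1)^2 + (a 2)^2 + (a 3)^2) →
      (a p ∣ a q) → (a p ∣ a r) → (a p ∣ a s) →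
      ∃ β : Fin 3 → ℚ_[3], (∀ i, TotallyReal (β i) ∧ IsIntegral ℤ (β i)) ∧
        α 0 ^ 2 + α 1 ^ 2 + α 2 ^ 2 + α 3 ^ 2 = β 0 ^ 2 + β 1 ^ 2 + β 2 ^ 2 := by
    intro p q r s hsum hq hr hs
    obtain ⟨b₁, b₂, γ, cy, cz, cw, hb₁, hb₂, hcy, hcz, hcw, hγ, heq⟩ :=
      core4 (a p) (a q) (a r) (a s) hq hr hs
    have hmem : ∀ u : ℤ_[3], (u = 0 ∨ u = a q ∨ u = a r ∨ u = a s) →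
        ((u:ℚ_[3]) = 0 ∨ ∃ i, u = a i) := by
      rintro u (rfl | rfl | rfl | rfl)
      · exact Or.inl (by norm_cast)
      · exact Or.inr ⟨q, rfl⟩
      · exact Or.inr ⟨r, rfl⟩
      · exact Or.inr ⟨s, rfl⟩
    have hmemc : ∀ (u : ℤ_[3]) (j : Fin 4), (u = a j ∨ u = 0) →
        ((u:ℚ_[3]) = 0 ∨ ∃ i, u = a i) := by
      rintro u j (rfl | rfl)
      · exact Or.inr ⟨j, rfl⟩
      · exact Or.inl (by norm_cast)
    -- γ is totally real and integral
    have hγtr : TotallyReal (γ:ℚ_[3]) ∧ IsIntegral ℤ (γ:ℚ_[3]) := by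
      apply totallyReal_sqrt ![(a p : ℚ_[3]), (cy : ℚ_[3]), (cz : ℚ_[3]), (cw : ℚ_[3])]
      · intro i
        fin_cases i
        · exact hprop (a p) (Or.inr ⟨p, rfl⟩)
        · exact hprop cy (hmemc cy q hcy)
        · exact hprop cz (hmemc cz r hcz)
        · exact hprop cw (hmemc cw s hcw)
      · have := congrArg (fun u : ℤ_[3] => (u : ℚ_[3])) hγ
        push_cast at this
        simpa [Fin.sum_univ_four] using this
    refine ⟨![(b₁:ℚ_[3]), (b₂:ℚ_[3]), (γ:ℚ_[3])], ?_, ?_⟩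
    · intro i
      fin_cases i
      · exact hprop b₁ (hmem b₁ hb₁)
      · exact hprop b₂ (hmem b₂ hb₂)
      · exact hγtr
    · have heq' : (a 0)^2 + (a 1)^2 + (a 2)^2 + (a 3)^2 = b₁^2 + b₂^2 + γ^2 := by
        rw [← hsum]
        exact heq
      have := congrArg (fun u : ℤ_[3] => (u : ℚ_[3])) heq'
      push_cast at this
      simp only [Matrix.cons_val_zero, Matrix.cons_val_one, Matrix.head_cons,
        Matrix.cons_val_two, Matrix.tail_cons]
      rw [← ha 0, ← ha 1, ← ha 2, ← ha 3]
      exact this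
  rcases hxeq with hx | hx | hx | hx
  · exact glue 0 1 2 3 (by ring) (hx ▸ hx1) (hx ▸ hx2) (hx ▸ hx3)
  · exact glue 1 0 2 3 (by ring) (hx ▸ hx0) (hx ▸ hx2) (hx ▸ hx3)
  · exact glue 2 0 1 3 (by ring) (hx ▸ hx0) (hx ▸ hx1) (hx ▸ hx3)
  · exact glue 3 0 1 2 (by ring) (hx ▸ hx0) (hx ▸ hx1) (hx ▸ hx2)



lemma two_not_sq (y : ℚ_[3]) (hy : IsIntegral ℤ y) : y ^ 2 ≠ 2 := by
  intro h
  obtain ⟨b, rfl⟩ := exists_padicInt hy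
  have hb : b ^ 2 = 2 := by
    have h2 : ((b^2 : ℤ_[3]) : ℚ_[3]) = ((2:ℤ_[3]):ℚ_[3]) := by
      rw [show ((2:ℤ_[3]):ℚ_[3]) = 2 by norm_cast]; push_cast; rw [h]
    exact Subtype.coe_inj.mp h2
  have : (PadicInt.toZMod b) ^ 2 = 2 := by
    have := congrArg PadicInt.toZMod hb
    rwa [map_pow, map_ofNat] at this
  revert this; generalize PadicInt.toZMod b = t; revert t; decide

lemma three_not_sum2 (y z : ℚ_[3]) (hy : IsIntegral ℤ y) (hz : IsIntegral ℤ z) :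
    y ^ 2 + z ^ 2 ≠ 3 := by
  intro h
  obtain ⟨b, rfl⟩ := exists_padicInt hy
  obtain ⟨c, rfl⟩ := exists_padicInt hz
  have hb : b ^ 2 + c ^ 2 = 3 := by
    have h2 : ((b^2 + c^2 : ℤ_[3]) : ℚ_[3]) = ((3:ℤ_[3]):ℚ_[3]) := by
      rw [show ((3:ℤ_[3]):ℚ_[3]) = 3 by norm_cast]; push_cast; rw [h]
    exact Subtype.coe_inj.mp h2
  have hz3 : (PadicInt.toZMod b) ^ 2 + (PadicInt.toZMod c) ^ 2 = 0 := by
    have := congrArg PadicInt.toZMod hb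
    rwa [map_add, map_pow, map_pow, map_ofNat] at this
  have hkey : ∀ B C : ZMod 3, B ^ 2 + C ^ 2 = 0 → B = 0 ∧ C = 0 := by decide
  obtain ⟨hB, hC⟩ := hkey _ _ hz3
  obtain ⟨b', rfl⟩ := (three_dvd_iff b).mpr hB
  obtain ⟨c', rfl⟩ := (three_dvd_iff c).mpr hC
  have h9 : (3:ℤ_[3]) * (3 * (b'^2 + c'^2)) = 3 * 1 := by linear_combination hb
  have h3ne : (3:ℤ_[3]) ≠ 0 := by
    intro h0
    have h0' : ((3:ℤ_[3]):ℚ_[3]) = 0 := by rw [h0]; norm_cast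
    rw [show ((3:ℤ_[3]):ℚ_[3]) = 3 by norm_cast] at h0'
    norm_num at h0'
  have : (3:ℤ_[3]) ∣ 1 := ⟨b'^2 + c'^2, (mul_left_cancel₀ h3ne h9).symm⟩
  rw [three_dvd_iff, map_one] at this
  exact absurd this (by decide)


theorem pythagoras_three_for_totally_real_integers_of_Qp3 :
    (∀ α : Fin 4 → ℚ_[3], (∀ i, TotallyReal (α i) ∧ IsIntegral ℤ (α i)) →
      ∃ β : Fin 3 → ℚ_[3], (∀ i, TotallyReal (β i) ∧ IsIntegral ℤ (β i)) ∧
        α 0 ^ 2 + α 1 ^ 2 + α 2 ^ 2 + α 3 ^ 2 = β 0 ^ 2 + β 1 ^ 2 + β 2 ^ 2) ∧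
    pythagorasNumberOf {x : ℚ_[3] | TotallyReal x ∧ IsIntegral ℤ x} = 3 := by
  refine ⟨part1, ?_⟩
  set S : Set ℚ_[3] := {x : ℚ_[3] | TotallyReal x ∧ IsIntegral ℤ x} with hS
  have mem0 : (0:ℚ_[3]) ∈ S := ⟨tr_zero, isIntegral_zero⟩
  have mem1 : (1:ℚ_[3]) ∈ S := ⟨tr_one, isIntegral_one⟩
  rw [pythagorasNumberOf]
  apply le_antisymm
  · apply sInf_le
    refine ⟨3, ?_, by norm_num⟩
    intro x
    constructor
    · rintro ⟨f, hf, rfl⟩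
      refine ⟨![f 0, f 1, f 2, 0], ?_, ?_⟩
      · intro i; fin_cases i <;> simp [hf 0, hf 1, hf 2, mem0]
      · simp [Fin.sum_univ_three, Fin.sum_univ_four]
    · rintro ⟨f, hf, rfl⟩
      obtain ⟨β, hβ, hβeq⟩ := part1 f (fun i => hf i)
      refine ⟨![β 0, β 1, β 2], ?_, ?_⟩
      · intro i
        fin_cases i
        · exact hβ 0
        · exact hβ 1
        · exact hβ 2
      · rw [Fin.sum_univ_four, hβeq]
        simp [Fin.sum_univ_three]
  · apply le_sInf
    rintro b ⟨n, hn, rfl⟩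
    have hge : 3 ≤ n := by
      by_contra hlt
      push_neg at hlt
      interval_cases n
      · have h1 : IsSumOfSquaresIn S 1 1 :=
          ⟨![1], by intro i; fin_cases i; exact mem1, by simp⟩
        obtain ⟨f, -, hfeq⟩ := (hn 1).mpr h1
        simp at hfeq
      · have h2 : IsSumOfSquaresIn S 2 2 :=
          ⟨![1, 1], by intro i; fin_cases i <;> exact mem1, by norm_num [Fin.sum_univ_two]⟩
        obtain ⟨f, hfS, hfeq⟩ := (hn 2).mpr h2
        rw [Fin.sum_univ_one] at hfeq
        exact two_not_sq (f 0) (hfS 0).2 hfeq.symm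
      · have h3 : IsSumOfSquaresIn S 3 3 :=
          ⟨![1, 1, 1], by intro i; fin_cases i <;> exact mem1,
            by norm_num [Fin.sum_univ_three, Matrix.cons_val_two, Matrix.tail_cons, Matrix.head_cons]⟩
        obtain ⟨f, hfS, hfeq⟩ := (hn 3).mpr h3
        rw [Fin.sum_univ_two] at hfeq
        exact three_not_sum2 (f 0) (f 1) (hfS 0).2 (hfS 1).2 hfeq.symm
    have : ((3:ℕ):ℕ∞) ≤ (n:ℕ∞) := Nat.cast_le.mpr hge
    simpa using this

end Part1
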